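/- The contrastive loss L_N is invariant under adding to the score any function of x alone, and it is minimized by the log density ratio: (i) for every measurable α : 𝒳 → ℝ, L_N(s') = L_N(s) where s'(x, c) := s(x, c) + α(x); (ii) the score s*(x, c) := log( p(c|x) / p(c) ) satisfies L_N(s*) ≤ L_N(s) for every measurable score s with L_N(s) finite. (First item of Proposition 2: the optimal critic satisfies ψ* = log(p(c|x)/p(c)) + α(x) up to an arbitrary function α of x.) -/

import Mathlib

open MeasureTheory ProbabilityTheory Filter
open scoped Classical ENNReal Topology

/-- The Kullback–Leibler divergence `KL(P‖Q) = ∫ log (dP/dQ) dP`, with value `+∞`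
when `P` is not absolutely continuous with respect to `Q` (or the integral is undefined). -/
noncomputable def klDivergence {Ω : Type*} [MeasurableSpace Ω] (P Q : Measure Ω) : EReal :=
  if P ≪ Q ∧ Integrable (fun ω => Real.log ((P.rnDeriv Q ω).toReal)) P
  then ((∫ ω, Real.log ((P.rnDeriv Q ω).toReal) ∂P : ℝ) : EReal)
  else ⊤

/-- The mutual information `I(X;C) := KL(law(X,C) ‖ law(X) ⊗ law(C))`. -/
noncomputable def mutualInfo {Ω 𝓧 𝒞 : Type*} [MeasurableSpace Ω] [MeasurableSpace 𝓧]
    [MeasurableSpace 𝒞] (μ : Measure Ω) (X : Ω → 𝓧) (C : Ω → 𝒞) : EReal :=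
  klDivergence (μ.map (fun ω => (X ω, C ω))) ((μ.map X).prod (μ.map C))

/-- The conditional law of `X` given `C = c`. -/
noncomputable def condLaw {Ω 𝓧 𝒞 : Type*} [MeasurableSpace Ω] [MeasurableSpace 𝓧]
    [MeasurableSpace 𝒞] (μ : Measure Ω) (X : Ω → 𝓧) (C : Ω → 𝒞) (c : 𝒞) : Measure 𝓧 :=
  (μ[|C ⁻¹' {c}]).map X

/-- The law `P_i` of `(X, (C_1, …, C_N))` under which `C_1, …, C_N` are i.i.d. copies of `C`
and `X` is drawn from the conditional law of `X` given `C = C_i`, conditionally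
independently of the other `C_j`. -/
noncomputable def Pmeas {Ω 𝓧 𝒞 : Type*} [MeasurableSpace Ω] [MeasurableSpace 𝓧]
    [MeasurableSpace 𝒞] (μ : Measure Ω) (X : Ω → 𝓧) (C : Ω → 𝒞) (N : ℕ) (i : Fin N) :
    Measure (𝓧 × (Fin N → 𝒞)) :=
  (Measure.pi fun _ : Fin N => μ.map C).bind
    (fun cs => (condLaw μ X C (cs i)).map (fun x => (x, cs)))

/-- The law `Q` of `(X, (C_1, …, C_N))` under which `X` has the marginal law of `X` and is
independent of `C_1, …, C_N`, which are i.i.d. copies of `C`. -/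
noncomputable def Qmeas {Ω 𝓧 𝒞 : Type*} [MeasurableSpace Ω] [MeasurableSpace 𝓧]
    [MeasurableSpace 𝒞] (μ : Measure Ω) (X : Ω → 𝓧) (C : Ω → 𝒞) (N : ℕ) :
    Measure (𝓧 × (Fin N → 𝒞)) :=
  (μ.map X).prod (Measure.pi fun _ : Fin N => μ.map C)

theorem test : True := trivial

/-- The `N`-sample contrastive loss
`L_N(s) := (1/N) Σ_i E_{P_i}[ −log( e^{s(X,C_i)} / Σ_j e^{s(X,C_j)} ) ]`. -/
noncomputable def contrastiveLoss {Ω 𝓧 : Type*} [MeasurableSpace Ω] [MeasurableSpace 𝓧]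
    {M : ℕ} (μ : Measure Ω) (X : Ω → 𝓧) (C : Ω → Fin M) (N : ℕ)
    (s : 𝓧 → Fin M → ℝ) : ℝ :=
  (1 / N) * ∑ i : Fin N, ∫ p, -Real.log (Real.exp (s p.1 (p.2 i)) /
    ∑ j : Fin N, Real.exp (s p.1 (p.2 j))) ∂(Pmeas μ X C N i)


open scoped NNReal

section AuxStmt6

lemma gibbs_aux {N : ℕ} (hN : 1 ≤ N) (a b : Fin N → ℝ) (ha : ∀ i, 0 < a i) :
    ∑ i, a i * (-Real.log (a i / ∑ j, a j)) ≤
      ∑ i, a i * (-Real.log (Real.exp (b i) / ∑ j, Real.exp (b j))) := by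
  have hNe : (Finset.univ : Finset (Fin N)).Nonempty := ⟨⟨0, hN⟩, Finset.mem_univ _⟩
  set A := ∑ j, a j with hA
  set E := ∑ j, Real.exp (b j) with hE
  have hApos : 0 < A := Finset.sum_pos (fun i _ => ha i) hNe
  have hEpos : 0 < E := Finset.sum_pos (fun i _ => Real.exp_pos _) hNe
  have key : ∀ i : Fin N,
      a i * (-Real.log (Real.exp (b i) / E)) - a i * (-Real.log (a i / A))
        = -(a i * Real.log (Real.exp (b i) * A / (a i * E))) := by
    intro i
    have h1 : Real.log (Real.exp (b i) / E) = b i - Real.log E := by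
      rw [Real.log_div (Real.exp_ne_zero _) hEpos.ne', Real.log_exp]
    have h2 : Real.log (a i / A) = Real.log (a i) - Real.log A :=
      Real.log_div (ha i).ne' hApos.ne'
    have h3 : Real.log (Real.exp (b i) * A / (a i * E)) =
        (b i + Real.log A) - (Real.log (a i) + Real.log E) := by
      rw [Real.log_div (mul_pos (Real.exp_pos _) hApos).ne' (mul_pos (ha i) hEpos).ne',
        Real.log_mul (Real.exp_ne_zero _) hApos.ne',
        Real.log_mul (ha i).ne' hEpos.ne', Real.log_exp]
    rw [h1, h2, h3]; ring
  have sum_le : ∑ i, a i * Real.log (Real.exp (b i) * A / (a i * E)) ≤ 0 := by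
    calc ∑ i, a i * Real.log (Real.exp (b i) * A / (a i * E))
        ≤ ∑ i, a i * (Real.exp (b i) * A / (a i * E) - 1) := by
          refine Finset.sum_le_sum fun i _ => ?_
          exact mul_le_mul_of_nonneg_left (Real.log_le_sub_one_of_pos
            (div_pos (mul_pos (Real.exp_pos _) hApos) (mul_pos (ha i) hEpos))) (ha i).le
      _ = ∑ i, (Real.exp (b i) * (A / E) - a i) := by
          refine Finset.sum_congr rfl fun i _ => ?_
          have h1 : a i ≠ 0 := (ha i).ne'
          have h2 : E ≠ 0 := hEpos.ne'
          field_simp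
      _ = 0 := by
          rw [Finset.sum_sub_distrib, ← Finset.sum_mul, ← hE, ← hA]
          field_simp
          ring
  have expand : (∑ i, a i * (-Real.log (Real.exp (b i) / E)))
      - (∑ i, a i * (-Real.log (a i / A)))
      = -∑ i, a i * Real.log (Real.exp (b i) * A / (a i * E)) := by
    rw [← Finset.sum_sub_distrib, ← Finset.sum_neg_distrib]
    exact Finset.sum_congr rfl fun i _ => key i
  linarith

lemma condLaw_density {Ω 𝓧 : Type*} [MeasurableSpace Ω] [MeasurableSpace 𝓧]
    {M : ℕ} (μ : Measure Ω) [IsProbabilityMeasure μ]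
    (X : Ω → 𝓧) (C : Ω → Fin M) (hX : Measurable X) (hC : Measurable C)
    (c : Fin M) (hcpos : 0 < μ (C ⁻¹' {c}))
    (pc : Fin M → 𝓧 → ℝ) (hpcmeas : ∀ c, Measurable (pc c))
    (hint : Integrable (pc c) (μ.map X))
    (hnn : 0 ≤ᵐ[μ.map X] pc c)
    (hver : ∀ A : Set 𝓧, MeasurableSet A →
      ∫ x in A, pc c x ∂(μ.map X) = (μ (X ⁻¹' A ∩ C ⁻¹' {c})).toReal) :
    condLaw μ X C c = (μ.map X).withDensity
      (fun x => ENNReal.ofReal (pc c x / (μ (C ⁻¹' {c})).toReal)) := by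
  have hCc : MeasurableSet (C ⁻¹' {c}) := hC (measurableSet_singleton c)
  have hpC : 0 < (μ (C ⁻¹' {c})).toReal := ENNReal.toReal_pos hcpos.ne' (measure_ne_top μ _)
  ext A hA
  rw [condLaw, Measure.map_apply hX hA, cond_apply hCc, withDensity_apply _ hA]
  have h1 : ∫⁻ x in A, ENNReal.ofReal (pc c x / (μ (C ⁻¹' {c})).toReal) ∂(μ.map X)
      = (∫⁻ x in A, ENNReal.ofReal (pc c x) ∂(μ.map X)) * (μ (C ⁻¹' {c}))⁻¹ := by
    simp_rw [div_eq_mul_inv, ENNReal.ofReal_mul' (inv_nonneg.2 hpC.le)]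
    rw [lintegral_mul_const _ (hpcmeas c).ennreal_ofReal,
      ENNReal.ofReal_inv_of_pos hpC, ENNReal.ofReal_toReal (measure_ne_top μ _)]
  have h2 : ∫⁻ x in A, ENNReal.ofReal (pc c x) ∂(μ.map X) = μ (X ⁻¹' A ∩ C ⁻¹' {c}) := by
    rw [← ofReal_integral_eq_lintegral_ofReal hint.integrableOn (ae_restrict_of_ae hnn),
      hver A hA, ENNReal.ofReal_toReal (measure_ne_top μ _)]
  rw [h1, h2, Set.inter_comm, mul_comm]

lemma dens_meas {𝓧 : Type*} [MeasurableSpace 𝓧] {M N : ℕ}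
    (pc : Fin M → 𝓧 → ℝ) (hpcmeas : ∀ c, Measurable (pc c)) (q : Fin M → ℝ) (i : Fin N) :
    Measurable (fun p : 𝓧 × (Fin N → Fin M) => pc (p.2 i) p.1 / q (p.2 i)) := by
  have h : (fun p : 𝓧 × (Fin N → Fin M) => pc (p.2 i) p.1 / q (p.2 i))
      = fun p => ∑ c : Fin M, if p.2 i = c then pc c p.1 / q c else 0 := by
    funext p; rw [Finset.sum_ite_eq]; simp
  rw [h]
  refine Finset.measurable_sum _ fun c _ => Measurable.ite ?_
    (((hpcmeas c).comp measurable_fst).div_const _) measurable_const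
  show MeasurableSet ((fun p : 𝓧 × (Fin N → Fin M) => p.2 i) ⁻¹' {c})
  exact measurableSet_preimage (measurable_snd.eval) (measurableSet_singleton c)

lemma Pmeas_density {Ω 𝓧 : Type*} [MeasurableSpace Ω] [MeasurableSpace 𝓧]
    {M : ℕ} (μ : Measure Ω) [IsProbabilityMeasure μ]
    (X : Ω → 𝓧) (C : Ω → Fin M) (hX : Measurable X) (hC : Measurable C)
    (pc : Fin M → 𝓧 → ℝ) (hpcmeas : ∀ c, Measurable (pc c))
    (hcond : ∀ c, condLaw μ X C c = (μ.map X).withDensity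
      (fun x => ENNReal.ofReal (pc c x / (μ (C ⁻¹' {c})).toReal)))
    (N : ℕ) (i : Fin N) :
    Pmeas μ X C N i = (Qmeas μ X C N).withDensity
      (fun p => ((Real.toNNReal (pc (p.2 i) p.1 / (μ (C ⁻¹' {p.2 i})).toReal) : ℝ≥0) : ℝ≥0∞)) := by
  haveI : IsProbabilityMeasure (μ.map X) := Measure.isProbabilityMeasure_map hX.aemeasurable
  haveI : IsProbabilityMeasure (μ.map C) := Measure.isProbabilityMeasure_map hC.aemeasurable
  set D : 𝓧 × (Fin N → Fin M) → ℝ≥0∞ :=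
    fun p => ((Real.toNNReal (pc (p.2 i) p.1 / (μ (C ⁻¹' {p.2 i})).toReal) : ℝ≥0) : ℝ≥0∞)
    with hD
  have hDmeas : Measurable D := by
    rw [hD]
    exact ((dens_meas pc hpcmeas (fun c => (μ (C ⁻¹' {c})).toReal) i)).ennreal_ofReal
  ext S hS
  rw [Pmeas, Measure.bind_apply hS (measurable_of_countable _).aemeasurable]
  calc ∫⁻ cs, ((condLaw μ X C (cs i)).map (fun x => (x, cs))) S
        ∂(Measure.pi fun _ : Fin N => μ.map C)
      = ∫⁻ cs, ∫⁻ x, (S.indicator D) (x, cs) ∂(μ.map X)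
        ∂(Measure.pi fun _ : Fin N => μ.map C) := by
        refine lintegral_congr fun cs => ?_
        rw [Measure.map_apply measurable_prodMk_right hS, hcond (cs i),
          withDensity_apply _ (measurable_prodMk_right hS),
          ← lintegral_indicator (measurable_prodMk_right hS) _]
        refine lintegral_congr fun x => ?_
        simp [Set.indicator_apply, hD, Set.mem_preimage, ENNReal.ofReal]
    _ = ∫⁻ p, (S.indicator D) p ∂((μ.map X).prod (Measure.pi fun _ : Fin N => μ.map C)) :=
        (lintegral_prod_symm _ (hDmeas.indicator hS).aemeasurable).symm
    _ = ((Qmeas μ X C N).withDensity D) S := by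
        rw [Qmeas, withDensity_apply _ hS, lintegral_indicator hS _]

end AuxStmt6

/-- first item of Proposition 2: the contrastive loss `L_N` is invariant
under adding to the score any function of `x` alone, and it is minimized by the log density
ratio `s*(x,c) = log(p(c|x)/p(c))`. -/

theorem stmt_6 {Ω 𝓧 : Type*} [MeasurableSpace Ω] [MeasurableSpace 𝓧]
    {M : ℕ} (μ : Measure Ω) [IsProbabilityMeasure μ]
    (X : Ω → 𝓧) (C : Ω → Fin M) (hX : Measurable X) (hC : Measurable C)
    (hpos : ∀ c : Fin M, 0 < μ (C ⁻¹' {c}))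
    (N : ℕ) (hN : 1 ≤ N)
    -- `pc c` is a fixed measurable version of the conditional probability `P(C = c | X = x)`
    (pc : Fin M → 𝓧 → ℝ) (hpcmeas : ∀ c, Measurable (pc c))
    (hpcver : ∀ c, ∀ A : Set 𝓧, MeasurableSet A →
      ∫ x in A, pc c x ∂(μ.map X) = (μ (X ⁻¹' A ∩ C ⁻¹' {c})).toReal)
    (hpcpos : ∀ c, ∀ᵐ x ∂(μ.map X), 0 < pc c x)
    -- finiteness of `L_N(s*)`
    (hstar : ∀ i : Fin N, Integrable (fun p : 𝓧 × (Fin N → Fin M) =>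
      -Real.log (Real.exp (Real.log (pc (p.2 i) p.1 / (μ (C ⁻¹' {p.2 i})).toReal)) /
        ∑ j : Fin N, Real.exp (Real.log (pc (p.2 j) p.1 / (μ (C ⁻¹' {p.2 j})).toReal))))
      (Pmeas μ X C N i)) :
    -- (i) invariance under adding any measurable function of `x` alone
    (∀ (s : 𝓧 → Fin M → ℝ) (α : 𝓧 → ℝ),
      Measurable (fun p : 𝓧 × Fin M => s p.1 p.2) → Measurable α →
      contrastiveLoss μ X C N (fun x c => s x c + α x) = contrastiveLoss μ X C N s)
    ∧
    -- (ii) the score `s*(x,c) = log(p(c|x)/p(c))` minimizes `L_N`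
    (∀ s : 𝓧 → Fin M → ℝ, Measurable (fun p : 𝓧 × Fin M => s p.1 p.2) →
      (∀ i : Fin N, Integrable (fun p : 𝓧 × (Fin N → Fin M) =>
        -Real.log (Real.exp (s p.1 (p.2 i)) / ∑ j : Fin N, Real.exp (s p.1 (p.2 j))))
        (Pmeas μ X C N i)) →
      contrastiveLoss μ X C N
          (fun x c => Real.log (pc c x / (μ (C ⁻¹' {c})).toReal))
        ≤ contrastiveLoss μ X C N s) := by
  constructor
  · -- (i) invariance
    intro s α hs hα
    unfold contrastiveLoss
    congr 1
    refine Finset.sum_congr rfl fun i _ => ?_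
    refine integral_congr_ae (Filter.Eventually.of_forall fun p => ?_)
    have h : Real.exp (s p.1 (p.2 i) + α p.1) / ∑ j, Real.exp (s p.1 (p.2 j) + α p.1)
        = Real.exp (s p.1 (p.2 i)) / ∑ j, Real.exp (s p.1 (p.2 j)) := by
      simp only [Real.exp_add, ← Finset.sum_mul]
      rw [mul_div_mul_right _ _ (Real.exp_ne_zero (α p.1))]
    simp only [h]
  · -- (ii) optimality
    intro s hsmeas hsint
    have hpCpos : ∀ c : Fin M, 0 < (μ (C ⁻¹' {c})).toReal :=
      fun c => ENNReal.toReal_pos (hpos c).ne' (measure_ne_top μ _)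
    haveI : IsProbabilityMeasure (μ.map X) := Measure.isProbabilityMeasure_map hX.aemeasurable
    haveI : IsProbabilityMeasure (μ.map C) := Measure.isProbabilityMeasure_map hC.aemeasurable
    have hpcae : ∀ c, 0 ≤ᵐ[μ.map X] pc c := fun c => (hpcpos c).mono fun x h => h.le
    have hpcint : ∀ c, Integrable (pc c) (μ.map X) := by
      intro c
      by_contra h
      have h0 := hpcver c Set.univ MeasurableSet.univ
      rw [Measure.restrict_univ, integral_undef h] at h0
      rw [Set.preimage_univ, Set.univ_inter] at h0
      exact (hpCpos c).ne' h0.symm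
    have hcond : ∀ c, condLaw μ X C c = (μ.map X).withDensity
        (fun x => ENNReal.ofReal (pc c x / (μ (C ⁻¹' {c})).toReal)) :=
      fun c => condLaw_density μ X C hX hC c (hpos c) pc hpcmeas (hpcint c)
        (hpcae c) (hpcver c)
    have hPQ : ∀ i : Fin N, Pmeas μ X C N i = (Qmeas μ X C N).withDensity
        (fun p => ((Real.toNNReal (pc (p.2 i) p.1 / (μ (C ⁻¹' {p.2 i})).toReal) : ℝ≥0)
          : ℝ≥0∞)) :=
      fun i => Pmeas_density μ X C hX hC pc hpcmeas hcond N i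
    have hdmeas : ∀ i : Fin N, Measurable (fun p : 𝓧 × (Fin N → Fin M) =>
        Real.toNNReal (pc (p.2 i) p.1 / (μ (C ⁻¹' {p.2 i})).toReal)) :=
      fun i => (dens_meas pc hpcmeas (fun c => (μ (C ⁻¹' {c})).toReal) i).real_toNNReal
    -- transfer of integrals and integrability from `P i` to `Q`
    have key : ∀ (i : Fin N) (F : 𝓧 × (Fin N → Fin M) → ℝ),
        ∫ p, F p ∂(Pmeas μ X C N i)
          = ∫ p, Real.toNNReal (pc (p.2 i) p.1 / (μ (C ⁻¹' {p.2 i})).toReal) • F p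
            ∂(Qmeas μ X C N) := by
      intro i F
      rw [hPQ i, integral_withDensity_eq_integral_smul (hdmeas i)]
    have keyInt : ∀ (i : Fin N) (F : 𝓧 × (Fin N → Fin M) → ℝ),
        Integrable F (Pmeas μ X C N i) ↔
          Integrable (fun p =>
            Real.toNNReal (pc (p.2 i) p.1 / (μ (C ⁻¹' {p.2 i})).toReal) • F p)
            (Qmeas μ X C N) := by
      intro i F
      rw [hPQ i]
      exact integrable_withDensity_iff_integrable_smul (hdmeas i)
    -- the a.e. positivity of `pc` under `Q`
    have hae : ∀ᵐ p ∂(Qmeas μ X C N), ∀ c, 0 < pc c p.1 := by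
      have hνall : ∀ᵐ x ∂(μ.map X), ∀ c, 0 < pc c x := ae_all_iff.2 hpcpos
      rw [ae_iff] at hνall ⊢
      refine measure_mono_null
        (t := {x : 𝓧 | ¬ ∀ c, 0 < pc c x} ×ˢ (Set.univ : Set (Fin N → Fin M)))
        (fun p hp => ⟨hp, Set.mem_univ _⟩) ?_
      rw [Qmeas, Measure.prod_prod, hνall, zero_mul]
    unfold contrastiveLoss
    refine mul_le_mul_of_nonneg_left ?_ (by positivity)
    -- abbreviations for the two integrands
    set G : Fin N → 𝓧 × (Fin N → Fin M) → ℝ := fun i p =>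
      -Real.log (Real.exp (Real.log (pc (p.2 i) p.1 / (μ (C ⁻¹' {p.2 i})).toReal)) /
        ∑ j, Real.exp (Real.log (pc (p.2 j) p.1 / (μ (C ⁻¹' {p.2 j})).toReal))) with hG
    set F : Fin N → 𝓧 × (Fin N → Fin M) → ℝ := fun i p =>
      -Real.log (Real.exp (s p.1 (p.2 i)) / ∑ j, Real.exp (s p.1 (p.2 j))) with hF
    have hGQ : ∀ i : Fin N, Integrable (fun p =>
        Real.toNNReal (pc (p.2 i) p.1 / (μ (C ⁻¹' {p.2 i})).toReal) • G i p)
        (Qmeas μ X C N) := fun i => (keyInt i (G i)).1 (hstar i)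
    have hFQ : ∀ i : Fin N, Integrable (fun p =>
        Real.toNNReal (pc (p.2 i) p.1 / (μ (C ⁻¹' {p.2 i})).toReal) • F i p)
        (Qmeas μ X C N) := fun i => (keyInt i (F i)).1 (hsint i)
    -- the pointwise (a.e.) Gibbs inequality
    have hpt : ∀ᵐ p ∂(Qmeas μ X C N),
        (∑ i, Real.toNNReal (pc (p.2 i) p.1 / (μ (C ⁻¹' {p.2 i})).toReal) • G i p)
          ≤ ∑ i, Real.toNNReal (pc (p.2 i) p.1 / (μ (C ⁻¹' {p.2 i})).toReal) • F i p := by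
      filter_upwards [hae] with p hp
      have ha : ∀ i : Fin N, 0 < pc (p.2 i) p.1 / (μ (C ⁻¹' {p.2 i})).toReal :=
        fun i => div_pos (hp _) (hpCpos _)
      have hco : ∀ i : Fin N,
          ((Real.toNNReal (pc (p.2 i) p.1 / (μ (C ⁻¹' {p.2 i})).toReal) : ℝ≥0) : ℝ)
            = pc (p.2 i) p.1 / (μ (C ⁻¹' {p.2 i})).toReal :=
        fun i => Real.coe_toNNReal _ (ha i).le
      have hexp : ∀ j : Fin N,
          Real.exp (Real.log (pc (p.2 j) p.1 / (μ (C ⁻¹' {p.2 j})).toReal))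
            = pc (p.2 j) p.1 / (μ (C ⁻¹' {p.2 j})).toReal := fun j => Real.exp_log (ha j)
      simp only [hG, hF, NNReal.smul_def, smul_eq_mul, hco, hexp]
      exact gibbs_aux hN (fun i => pc (p.2 i) p.1 / (μ (C ⁻¹' {p.2 i})).toReal)
        (fun i => s p.1 (p.2 i)) ha
    calc ∑ i, ∫ p, G i p ∂(Pmeas μ X C N i)
        = ∑ i, ∫ p, Real.toNNReal (pc (p.2 i) p.1 / (μ (C ⁻¹' {p.2 i})).toReal) • G i p
            ∂(Qmeas μ X C N) := Finset.sum_congr rfl fun i _ => key i (G i)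
      _ = ∫ p, ∑ i, Real.toNNReal (pc (p.2 i) p.1 / (μ (C ⁻¹' {p.2 i})).toReal) • G i p
            ∂(Qmeas μ X C N) := (integral_finset_sum _ fun i _ => hGQ i).symm
      _ ≤ ∫ p, ∑ i, Real.toNNReal (pc (p.2 i) p.1 / (μ (C ⁻¹' {p.2 i})).toReal) • F i p
            ∂(Qmeas μ X C N) := integral_mono_ae (integrable_finset_sum _ fun i _ => hGQ i)
              (integrable_finset_sum _ fun i _ => hFQ i) hpt
      _ = ∑ i, ∫ p, Real.toNNReal (pc (p.2 i) p.1 / (μ (C ⁻¹' {p.2 i})).toReal) • F i p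
            ∂(Qmeas μ X C N) := integral_finset_sum _ fun i _ => hFQ i
      _ = ∑ i, ∫ p, F i p ∂(Pmeas μ X C N i) :=
            Finset.sum_congr rfl fun i _ => (key i (F i)).symm
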